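/- Supplementary Lemma (Hellinger–ℓ₂ comparison for exponential families): Let (φ_j)_{j≥1}, together with φ₀ ≡ 1, be an orthonormal basis of L₂[0,1] with ∫₀¹φ_j = 0 and sup_j‖φ_j‖_∞ < ∞, and for θ ∈ ℓ₁ ∩ ℓ₂ set f_θ = exp(Σ_j θ_jφ_j − c(θ)) with e^{c(θ)} = ∫₀¹ exp(Σ_jθ_jφ_j(x))dx. Then: (i) there exists c̃ > 0 such that for all A > 0 there exists C_A > 0 with C_A⁻¹ e^{−c̃(‖θ₁‖₁ + ‖θ₁−θ₂‖₁)} ‖θ₁−θ₂‖₂² ≤ h²(f_{θ₁}, f_{θ₂}) ≤ C_A e^{c̃(‖θ₁‖₁ + ‖θ₁−θ₂‖₁)} ‖θ₁−θ₂‖₂² for all θ₁, θ₂ ∈ ℓ₁ ∩ ℓ₂ with ‖θ₁ − θ₂‖₂ ≤ A; consequently, for any c > 0 and θ₀ with ‖θ₀‖₁ = O(1), h(f_θ, f_{θ₀}) ≍ ‖θ − θ₀‖₂ uniformly over θ ∈ ℝ^k with ‖θ − θ₀‖₂ ≤ c/√k; (ii) there exist δ > 0 and C > 0 such that for any θ,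 θ' ∈ ℝ^k with ‖θ − θ'‖₂ ≤ δ/√k, h(f_θ, f_{θ'}) ≤ C√k ‖θ − θ'‖₂. -/

import Mathlib

open MeasureTheory

set_option linter.unusedSectionVars false
set_option maxHeartbeats 1000000

noncomputable section

/-- Normalizing constant `c(θ)` of the log-linear density. -/
def logNorm (φ : ℕ → ℝ → ℝ) (θ : ℕ → ℝ) : ℝ :=
  Real.log (∫ t in Set.Icc (0 : ℝ) 1, Real.exp (∑' j, θ j * φ j t))

/-- The log-linear density `f_θ = exp(Σ_j θ_jφ_j − c(θ))`. -/
def expDens (φ : ℕ → ℝ → ℝ) (θ : ℕ → ℝ) (t : ℝ) : ℝ :=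
  Real.exp ((∑' j, θ j * φ j t) - logNorm φ θ)

/-- Squared Hellinger distance on `[0,1]`. -/
def hellSq (p q : ℝ → ℝ) : ℝ :=
  ∫ t in Set.Icc (0 : ℝ) 1, (Real.sqrt (p t) - Real.sqrt (q t)) ^ 2

def hell (p q : ℝ → ℝ) : ℝ := Real.sqrt (hellSq p q)

def l1norm (θ : ℕ → ℝ) : ℝ := ∑' j, |θ j|

def l2norm (θ : ℕ → ℝ) : ℝ := Real.sqrt (∑' j, θ j ^ 2)

def memL1L2 (θ : ℕ → ℝ) : Prop :=
  Summable (fun j => |θ j|) ∧ Summable (fun j => θ j ^ 2)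

/-- Identification of `ℝ^k` with zero-padded sequences. -/
def pad (k : ℕ) (v : Fin k → ℝ) : ℕ → ℝ :=
  fun j => if h : j < k then v ⟨j, h⟩ else 0

namespace HellAux

open Real Set

local notation "μ01" => (volume.restrict (Set.Icc (0:ℝ) 1))

lemma prob01 : IsProbabilityMeasure μ01 :=
  ⟨by rw [Measure.restrict_apply_univ, Real.volume_Icc]; norm_num⟩

lemma l1norm_nonneg (θ : ℕ → ℝ) : 0 ≤ l1norm θ := tsum_nonneg fun _ => abs_nonneg _

lemma l2norm_nonneg (θ : ℕ → ℝ) : 0 ≤ l2norm θ := Real.sqrt_nonneg _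

lemma l2norm_sq (θ : ℕ → ℝ) : l2norm θ ^ 2 = ∑' j, θ j ^ 2 :=
  Real.sq_sqrt (tsum_nonneg fun _ => sq_nonneg _)

lemma exp_mul_exp (x y : ℝ) : Real.exp x * Real.exp y = Real.exp (x + y) :=
  (Real.exp_add x y).symm

lemma sqrt_exp' (x : ℝ) : Real.sqrt (Real.exp x) = Real.exp (x/2) := by
  rw [show Real.exp x = Real.exp (x/2) ^ 2 by rw [sq, ← Real.exp_add]; ring_nf]
  exact Real.sqrt_sq (Real.exp_pos _).le

/-! ### pointwise exponential estimates -/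

lemma exp_key {a b : ℝ} (h : b ≤ a) :
    Real.exp b * (a - b) ≤ Real.exp a - Real.exp b ∧
      Real.exp a - Real.exp b ≤ Real.exp a * (a - b) := by
  have e1 : Real.exp a = Real.exp b * Real.exp (a - b) := by rw [← Real.exp_add]; ring_nf
  have e2 : Real.exp b = Real.exp a * Real.exp (b - a) := by rw [← Real.exp_add]; ring_nf
  have h1 := Real.add_one_le_exp (a - b)
  have h2 := Real.add_one_le_exp (b - a)
  constructor
  · nlinarith [Real.exp_pos b]
  · nlinarith [Real.exp_pos a]

lemma exp_sandwich_aux {a b M : ℝ} (ha : |a| ≤ M) (hb : |b| ≤ M) (h : b ≤ a) :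
    Real.exp (-(2*M)) * (a-b)^2 ≤ (Real.exp a - Real.exp b)^2 ∧
      (Real.exp a - Real.exp b)^2 ≤ Real.exp (2*M) * (a-b)^2 := by
  obtain ⟨k1, k2⟩ := exp_key h
  have hab : 0 ≤ a - b := sub_nonneg.2 h
  have hbM : Real.exp (-M) ≤ Real.exp b := Real.exp_le_exp.2 (abs_le.1 hb).1
  have haM : Real.exp a ≤ Real.exp M := Real.exp_le_exp.2 (abs_le.1 ha).2
  have low : Real.exp (-M) * (a-b) ≤ Real.exp a - Real.exp b :=
    le_trans (mul_le_mul_of_nonneg_right hbM hab) k1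
  have up : Real.exp a - Real.exp b ≤ Real.exp M * (a-b) :=
    le_trans k2 (mul_le_mul_of_nonneg_right haM hab)
  have l0 : 0 ≤ Real.exp (-M) * (a-b) := mul_nonneg (Real.exp_pos _).le hab
  have eneg : Real.exp (-(2*M)) = Real.exp (-M) * Real.exp (-M) := by
    rw [← Real.exp_add]; ring_nf
  have epos : Real.exp (2*M) = Real.exp M * Real.exp M := by
    rw [← Real.exp_add]; ring_nf
  constructor
  · have hsq := pow_le_pow_left₀ l0 low 2
    calc Real.exp (-(2*M)) * (a-b)^2 = (Real.exp (-M) * (a-b))^2 := by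
          rw [eneg]; ring
      _ ≤ (Real.exp a - Real.exp b)^2 := hsq
  · have h0 : 0 ≤ Real.exp a - Real.exp b := le_trans l0 low
    have hsq := pow_le_pow_left₀ h0 up 2
    calc (Real.exp a - Real.exp b)^2 ≤ (Real.exp M * (a-b))^2 := hsq
      _ = Real.exp (2*M) * (a-b)^2 := by rw [epos]; ring

lemma exp_sandwich {a b M : ℝ} (ha : |a| ≤ M) (hb : |b| ≤ M) :
    Real.exp (-(2*M)) * (a-b)^2 ≤ (Real.exp a - Real.exp b)^2 ∧
      (Real.exp a - Real.exp b)^2 ≤ Real.exp (2*M) * (a-b)^2 := by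
  rcases le_total b a with h | h
  · exact exp_sandwich_aux ha hb h
  · have := exp_sandwich_aux hb ha h
    have e1 : (Real.exp b - Real.exp a)^2 = (Real.exp a - Real.exp b)^2 := by ring
    have e2 : (b-a)^2 = (a-b)^2 := by ring
    constructor
    · have := this.1; rw [e1, e2] at this; exact this
    · have := this.2; rw [e1, e2] at this; exact this

lemma exp_abs_diff {a b M : ℝ} (ha : |a| ≤ M) (hb : |b| ≤ M) :
    |Real.exp a - Real.exp b| ≤ Real.exp M * |a - b| := by
  rcases le_total b a with h | h
  · obtain ⟨k1, k2⟩ := exp_key h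
    have hab : 0 ≤ a - b := sub_nonneg.2 h
    have h0 : 0 ≤ Real.exp a - Real.exp b :=
      le_trans (mul_nonneg (Real.exp_pos b).le hab) k1
    rw [abs_of_nonneg h0, abs_of_nonneg hab]
    exact le_trans k2 (mul_le_mul_of_nonneg_right (Real.exp_le_exp.2 (abs_le.1 ha).2) hab)
  · obtain ⟨k1, k2⟩ := exp_key h
    have hab : 0 ≤ b - a := sub_nonneg.2 h
    have h0 : 0 ≤ Real.exp b - Real.exp a :=
      le_trans (mul_nonneg (Real.exp_pos a).le hab) k1
    rw [abs_sub_comm, abs_sub_comm a b, abs_of_nonneg h0, abs_of_nonneg hab]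
    exact le_trans k2 (mul_le_mul_of_nonneg_right (Real.exp_le_exp.2 (abs_le.1 hb).2) hab)

lemma exp_sq_diff (a b : ℝ) :
    (Real.exp a - Real.exp b)^2 ≤ Real.exp (2*a) * (Real.exp (2*|a-b|) * (a-b)^2) := by
  rcases le_total b a with h | h
  · obtain ⟨k1, k2⟩ := exp_key h
    have hab : 0 ≤ a - b := sub_nonneg.2 h
    have h0 : 0 ≤ Real.exp a - Real.exp b :=
      le_trans (mul_nonneg (Real.exp_pos b).le hab) k1
    have hsq := pow_le_pow_left₀ h0 k2 2
    have e : (Real.exp a * (a-b))^2 = Real.exp (2*a) * (a-b)^2 := by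
      rw [mul_pow, sq, ← Real.exp_add]; ring_nf
    have hge1 : 1 ≤ Real.exp (2*|a-b|) := Real.one_le_exp (by positivity)
    nlinarith [sq_nonneg (a-b), Real.exp_pos (2*a)]
  · obtain ⟨k1, k2⟩ := exp_key h
    have hab : 0 ≤ b - a := sub_nonneg.2 h
    have h0 : 0 ≤ Real.exp b - Real.exp a :=
      le_trans (mul_nonneg (Real.exp_pos a).le hab) k1
    have hsq := pow_le_pow_left₀ h0 k2 2
    have habs : |a-b| = b - a := by rw [abs_sub_comm, abs_of_nonneg hab]
    have e3' : Real.exp (b+b) = Real.exp (2*a) * Real.exp (2*(b-a)) := by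
      rw [exp_mul_exp]; ring_nf
    have e3 : (Real.exp b * (b-a))^2 = Real.exp (2*a) * (Real.exp (2*(b-a)) * (b-a)^2) := by
      rw [mul_pow, sq, exp_mul_exp, e3']; ring
    calc (Real.exp a - Real.exp b)^2 = (Real.exp b - Real.exp a)^2 := by ring
      _ ≤ (Real.exp b * (b-a))^2 := hsq
      _ = Real.exp (2*a) * (Real.exp (2*(b-a)) * (b-a)^2) := e3
      _ = Real.exp (2*a) * (Real.exp (2*|a-b|) * (a-b)^2) := by rw [habs]; ring_nf

variable {φ : ℕ → ℝ → ℝ} {B : ℝ}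

section basic

variable (hB : 0 ≤ B) (hmeas : ∀ j, Measurable (φ j))
  (hbd : ∀ (j : ℕ), ∀ t ∈ Set.Icc (0:ℝ) 1, |φ j t| ≤ B)

include hB hbd in
lemma summable_term {θ : ℕ → ℝ} (hθ : Summable fun j => |θ j|) {t : ℝ}
    (ht : t ∈ Set.Icc (0:ℝ) 1) : Summable fun j => θ j * φ j t := by
  refine Summable.of_norm_bounded (g := fun j => |θ j| * B) (hθ.mul_right B) ?_
  intro j
  rw [Real.norm_eq_abs, abs_mul]
  exact mul_le_mul_of_nonneg_left (hbd j t ht) (abs_nonneg _)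

include hB hbd in
lemma abs_S_le {θ : ℕ → ℝ} (hθ : Summable fun j => |θ j|) {t : ℝ}
    (ht : t ∈ Set.Icc (0:ℝ) 1) : |∑' j, θ j * φ j t| ≤ B * l1norm θ := by
  have hsum : Summable fun j => ‖θ j * φ j t‖ := by
    refine Summable.of_nonneg_of_le (fun j => norm_nonneg _) (fun j => ?_) (hθ.mul_right B)
    rw [Real.norm_eq_abs, abs_mul]
    exact mul_le_mul_of_nonneg_left (hbd j t ht) (abs_nonneg _)
  calc |∑' j, θ j * φ j t| ≤ ∑' j, ‖θ j * φ j t‖ := norm_tsum_le_tsum_norm hsum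
    _ ≤ ∑' j, |θ j| * B := by
        refine Summable.tsum_le_tsum (fun j => ?_) hsum (hθ.mul_right B)
        rw [Real.norm_eq_abs, abs_mul]
        exact mul_le_mul_of_nonneg_left (hbd j t ht) (abs_nonneg _)
    _ = B * l1norm θ := by rw [tsum_mul_right, l1norm, mul_comm]

include hB hmeas hbd in
lemma aesm_S {θ : ℕ → ℝ} (hθ : Summable fun j => |θ j|) :
    AEStronglyMeasurable (fun t => ∑' j, θ j * φ j t) μ01 := by
  refine aestronglyMeasurable_of_tendsto_ae (f := fun n t => ∑ j ∈ Finset.range n, θ j * φ j t)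
    Filter.atTop (fun n => ?_) ?_
  · exact (Finset.measurable_sum _ (fun j _ => (hmeas j).const_mul (θ j))).aestronglyMeasurable
  · refine ae_restrict_of_forall_mem measurableSet_Icc (fun t ht => ?_)
    exact ((summable_term hB hbd hθ ht).hasSum).tendsto_sum_nat

lemma integrable_bdd {f : ℝ → ℝ} (hf : AEStronglyMeasurable f μ01) {C : ℝ}
    (h : ∀ t ∈ Set.Icc (0:ℝ) 1, |f t| ≤ C) : Integrable f μ01 := by
  haveI := prob01
  refine Integrable.mono' (integrable_const C) hf ?_
  exact ae_restrict_of_forall_mem measurableSet_Icc fun t ht => by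
    simpa [Real.norm_eq_abs] using h t ht

lemma integral_const01 (c : ℝ) : ∫ _ in Set.Icc (0:ℝ) 1, c = c := by
  haveI := prob01
  simp

lemma integral_mono01 {f g : ℝ → ℝ} (hf : Integrable f μ01) (hg : Integrable g μ01)
    (h : ∀ t ∈ Set.Icc (0:ℝ) 1, f t ≤ g t) :
    (∫ t in Set.Icc (0:ℝ) 1, f t) ≤ ∫ t in Set.Icc (0:ℝ) 1, g t :=
  integral_mono_ae hf hg (ae_restrict_of_forall_mem measurableSet_Icc h)

include hB hmeas hbd in
lemma integrable_exp_S {θ : ℕ → ℝ} (hθ : Summable fun j => |θ j|) :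
    Integrable (fun t => Real.exp (∑' j, θ j * φ j t)) μ01 := by
  refine integrable_bdd (Real.continuous_exp.comp_aestronglyMeasurable
    (aesm_S hB hmeas hbd hθ)) (C := Real.exp (B * l1norm θ)) (fun t ht => ?_)
  rw [abs_of_pos (Real.exp_pos _)]
  exact Real.exp_le_exp.2 (le_trans (le_abs_self _) (abs_S_le hB hbd hθ ht))

include hB hmeas hbd in
lemma Zc_ge {θ : ℕ → ℝ} (hθ : Summable fun j => |θ j|) :
    Real.exp (-(B * l1norm θ)) ≤ ∫ t in Set.Icc (0:ℝ) 1, Real.exp (∑' j, θ j * φ j t) := by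
  calc Real.exp (-(B * l1norm θ))
      = ∫ _ in Set.Icc (0:ℝ) 1, Real.exp (-(B * l1norm θ)) := (integral_const01 _).symm
    _ ≤ ∫ t in Set.Icc (0:ℝ) 1, Real.exp (∑' j, θ j * φ j t) := by
        refine integral_mono01 (integrable_const _) (integrable_exp_S hB hmeas hbd hθ)
          (fun t ht => Real.exp_le_exp.2 ?_)
        have := abs_S_le hB hbd hθ ht
        linarith [neg_abs_le (∑' j, θ j * φ j t)]

include hB hmeas hbd in
lemma Zc_le {θ : ℕ → ℝ} (hθ : Summable fun j => |θ j|) :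
    (∫ t in Set.Icc (0:ℝ) 1, Real.exp (∑' j, θ j * φ j t)) ≤ Real.exp (B * l1norm θ) := by
  calc (∫ t in Set.Icc (0:ℝ) 1, Real.exp (∑' j, θ j * φ j t))
      ≤ ∫ _ in Set.Icc (0:ℝ) 1, Real.exp (B * l1norm θ) := by
        refine integral_mono01 (integrable_exp_S hB hmeas hbd hθ) (integrable_const _)
          (fun t ht => Real.exp_le_exp.2 ?_)
        exact le_trans (le_abs_self _) (abs_S_le hB hbd hθ ht)
    _ = Real.exp (B * l1norm θ) := integral_const01 _

include hB hmeas hbd in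
lemma Zc_pos {θ : ℕ → ℝ} (hθ : Summable fun j => |θ j|) :
    0 < ∫ t in Set.Icc (0:ℝ) 1, Real.exp (∑' j, θ j * φ j t) :=
  lt_of_lt_of_le (Real.exp_pos _) (Zc_ge hB hmeas hbd hθ)

include hB hmeas hbd in
lemma exp_logNorm {θ : ℕ → ℝ} (hθ : Summable fun j => |θ j|) :
    Real.exp (logNorm φ θ) = ∫ t in Set.Icc (0:ℝ) 1, Real.exp (∑' j, θ j * φ j t) :=
  Real.exp_log (Zc_pos hB hmeas hbd hθ)

include hB hmeas hbd in
lemma abs_logNorm_le {θ : ℕ → ℝ} (hθ : Summable fun j => |θ j|) :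
    |logNorm φ θ| ≤ B * l1norm θ := by
  rw [abs_le]
  constructor
  · have := Real.log_le_log (Real.exp_pos _) (Zc_ge hB hmeas hbd hθ)
    rw [Real.log_exp] at this
    exact this
  · have := Real.log_le_log (Zc_pos hB hmeas hbd hθ) (Zc_le hB hmeas hbd hθ)
    rw [Real.log_exp] at this
    exact this

include hB hmeas hbd in
lemma integral_expDens {θ : ℕ → ℝ} (hθ : Summable fun j => |θ j|) :
    ∫ t in Set.Icc (0:ℝ) 1, expDens φ θ t = 1 := by
  have h1 : ∀ t, expDens φ θ t
      = Real.exp (∑' j, θ j * φ j t) * Real.exp (-(logNorm φ θ)) := by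
    intro t; rw [expDens, ← Real.exp_add]; ring_nf
  calc ∫ t in Set.Icc (0:ℝ) 1, expDens φ θ t
      = ∫ t in Set.Icc (0:ℝ) 1,
          Real.exp (∑' j, θ j * φ j t) * Real.exp (-(logNorm φ θ)) :=
        integral_congr_ae (Filter.Eventually.of_forall h1)
    _ = (∫ t in Set.Icc (0:ℝ) 1, Real.exp (∑' j, θ j * φ j t)) * Real.exp (-(logNorm φ θ)) :=
        integral_mul_const _ _
    _ = 1 := by
        rw [Real.exp_neg, exp_logNorm hB hmeas hbd hθ]
        exact mul_inv_cancel₀ (Zc_pos hB hmeas hbd hθ).ne'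

/-! ### Parseval-type identities -/

variable (horth : ∀ i j : ℕ, (∫ t in Set.Icc (0:ℝ) 1, φ i t * φ j t) = if i = j then 1 else 0)
  (hmean : ∀ j : ℕ, (∫ t in Set.Icc (0:ℝ) 1, φ j t) = 0)

include hB hmeas hbd hmean in
lemma integral_S {d : ℕ → ℝ} (hd : Summable fun j => |d j|) :
    ∫ t in Set.Icc (0:ℝ) 1, (∑' j, d j * φ j t) = 0 := by
  have hint : ∀ j : ℕ, Integrable (fun t => d j * φ j t) μ01 := fun j =>
    integrable_bdd ((hmeas j).aestronglyMeasurable.const_mul _) (C := |d j| * B)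
      (fun t ht => by
        rw [abs_mul]
        exact mul_le_mul_of_nonneg_left (hbd j t ht) (abs_nonneg _))
  have hsum : Summable fun j => ∫ t in Set.Icc (0:ℝ) 1, ‖d j * φ j t‖ := by
    refine Summable.of_nonneg_of_le (fun j => integral_nonneg fun t => norm_nonneg _)
      (fun j => ?_) (hd.mul_right B)
    calc (∫ t in Set.Icc (0:ℝ) 1, ‖d j * φ j t‖)
        ≤ ∫ _ in Set.Icc (0:ℝ) 1, |d j| * B := by
          refine integral_mono01 (hint j).norm (integrable_const _) (fun t ht => ?_)
          rw [Real.norm_eq_abs, abs_mul]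
          exact mul_le_mul_of_nonneg_left (hbd j t ht) (abs_nonneg _)
      _ = |d j| * B := integral_const01 _
  rw [← MeasureTheory.integral_tsum_of_summable_integral_norm hint hsum]
  have : ∀ j : ℕ, (∫ t in Set.Icc (0:ℝ) 1, d j * φ j t) = 0 := by
    intro j
    rw [MeasureTheory.integral_const_mul, hmean j, mul_zero]
  simp [this]

include hB hmeas hbd horth in
lemma integral_phi_mul_S {d : ℕ → ℝ} (hd : Summable fun j => |d j|) (i : ℕ) :
    ∫ t in Set.Icc (0:ℝ) 1, φ i t * (∑' j, d j * φ j t) = d i := by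
  have hrw : ∀ t : ℝ, φ i t * (∑' j, d j * φ j t) = ∑' j, d j * (φ i t * φ j t) := by
    intro t
    rw [← tsum_mul_left]
    exact tsum_congr fun j => by ring
  have hint : ∀ j : ℕ, Integrable (fun t => d j * (φ i t * φ j t)) μ01 := fun j =>
    integrable_bdd (((hmeas i).mul (hmeas j)).aestronglyMeasurable.const_mul _)
      (C := |d j| * (B * B)) (fun t ht => by
        rw [abs_mul, abs_mul]
        exact mul_le_mul_of_nonneg_left
          (mul_le_mul (hbd i t ht) (hbd j t ht) (abs_nonneg _) hB) (abs_nonneg _))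
  have hsum : Summable fun j => ∫ t in Set.Icc (0:ℝ) 1, ‖d j * (φ i t * φ j t)‖ := by
    refine Summable.of_nonneg_of_le (fun j => integral_nonneg fun t => norm_nonneg _)
      (fun j => ?_) (hd.mul_right (B * B))
    calc (∫ t in Set.Icc (0:ℝ) 1, ‖d j * (φ i t * φ j t)‖)
        ≤ ∫ _ in Set.Icc (0:ℝ) 1, |d j| * (B * B) := by
          refine integral_mono01 (hint j).norm (integrable_const _) (fun t ht => ?_)
          rw [Real.norm_eq_abs, abs_mul, abs_mul]
          exact mul_le_mul_of_nonneg_left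
            (mul_le_mul (hbd i t ht) (hbd j t ht) (abs_nonneg _) hB) (abs_nonneg _)
      _ = |d j| * (B * B) := integral_const01 _
  calc ∫ t in Set.Icc (0:ℝ) 1, φ i t * (∑' j, d j * φ j t)
      = ∫ t in Set.Icc (0:ℝ) 1, ∑' j, d j * (φ i t * φ j t) :=
        integral_congr_ae (Filter.Eventually.of_forall hrw)
    _ = ∑' j, ∫ t in Set.Icc (0:ℝ) 1, d j * (φ i t * φ j t) :=
        (MeasureTheory.integral_tsum_of_summable_integral_norm hint hsum).symm
    _ = ∑' (j : ℕ), (if j = i then d i else 0) := by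
        refine tsum_congr fun j => ?_
        rw [MeasureTheory.integral_const_mul, horth i j]
        by_cases h : j = i
        · subst h; simp
        · rw [if_neg h, if_neg (fun hh : i = j => h hh.symm), mul_zero]
    _ = d i := tsum_ite_eq i (fun _ => d i)

include hB hmeas hbd horth in
lemma integral_S_sq {d : ℕ → ℝ} (hd : Summable fun j => |d j|) :
    ∫ t in Set.Icc (0:ℝ) 1, (∑' j, d j * φ j t)^2 = ∑' j, d j ^ 2 := by
  have hgaesm := aesm_S hB hmeas hbd hd
  have hrw : ∀ t : ℝ, (∑' j, d j * φ j t)^2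
      = ∑' i, d i * (φ i t * (∑' j, d j * φ j t)) := by
    intro t
    rw [sq, ← tsum_mul_right]
    exact tsum_congr fun i => by ring
  have hint : ∀ i : ℕ, Integrable (fun t => d i * (φ i t * (∑' j, d j * φ j t))) μ01 := by
    intro i
    refine integrable_bdd (((hmeas i).aestronglyMeasurable.mul hgaesm).const_mul _)
      (C := |d i| * (B * (B * l1norm d))) (fun t ht => ?_)
    rw [abs_mul, abs_mul]
    refine mul_le_mul_of_nonneg_left ?_ (abs_nonneg _)
    exact mul_le_mul (hbd i t ht) (abs_S_le hB hbd hd ht) (abs_nonneg _) hB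
  have hsum : Summable fun i =>
      ∫ t in Set.Icc (0:ℝ) 1, ‖d i * (φ i t * (∑' j, d j * φ j t))‖ := by
    refine Summable.of_nonneg_of_le (fun i => integral_nonneg fun t => norm_nonneg _)
      (fun i => ?_) (hd.mul_right (B * (B * l1norm d)))
    calc (∫ t in Set.Icc (0:ℝ) 1, ‖d i * (φ i t * (∑' j, d j * φ j t))‖)
        ≤ ∫ _ in Set.Icc (0:ℝ) 1, |d i| * (B * (B * l1norm d)) := by
          refine integral_mono01 (hint i).norm (integrable_const _) (fun t ht => ?_)
          rw [Real.norm_eq_abs, abs_mul, abs_mul]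
          refine mul_le_mul_of_nonneg_left ?_ (abs_nonneg _)
          exact mul_le_mul (hbd i t ht) (abs_S_le hB hbd hd ht) (abs_nonneg _) hB
      _ = |d i| * (B * (B * l1norm d)) := integral_const01 _
  calc ∫ t in Set.Icc (0:ℝ) 1, (∑' j, d j * φ j t)^2
      = ∫ t in Set.Icc (0:ℝ) 1, ∑' i, d i * (φ i t * (∑' j, d j * φ j t)) :=
        integral_congr_ae (Filter.Eventually.of_forall hrw)
    _ = ∑' i, ∫ t in Set.Icc (0:ℝ) 1, d i * (φ i t * (∑' j, d j * φ j t)) :=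
        (MeasureTheory.integral_tsum_of_summable_integral_norm hint hsum).symm
    _ = ∑' i, d i ^ 2 := by
        refine tsum_congr fun i => ?_
        rw [MeasureTheory.integral_const_mul, integral_phi_mul_S hB hmeas hbd horth hd i, sq]

include hB hmeas hbd in
lemma sub_S {θ1 θ2 : ℕ → ℝ} (h1 : Summable fun j => |θ1 j|) (h2 : Summable fun j => |θ2 j|)
    {t : ℝ} (ht : t ∈ Set.Icc (0:ℝ) 1) :
    (∑' j, θ1 j * φ j t) - (∑' j, θ2 j * φ j t) = ∑' j, (θ1 j - θ2 j) * φ j t := by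
  rw [← Summable.tsum_sub (summable_term hB hbd h1 ht) (summable_term hB hbd h2 ht)]
  exact tsum_congr fun j => by ring

include hB hmeas hbd horth hmean in
lemma integral_sub_const_sq {d : ℕ → ℝ} (hd : Summable fun j => |d j|) (κ : ℝ) :
    ∫ t in Set.Icc (0:ℝ) 1, ((∑' j, d j * φ j t) - κ)^2 = (∑' j, d j ^ 2) + κ^2 := by
  have hgaesm := aesm_S hB hmeas hbd hd
  have hgbd : ∀ t ∈ Set.Icc (0:ℝ) 1, |∑' j, d j * φ j t| ≤ B * l1norm d :=
    fun t ht => abs_S_le hB hbd hd ht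
  have hgint : Integrable (fun t => ∑' j, d j * φ j t) μ01 := integrable_bdd hgaesm hgbd
  have hg2int : Integrable (fun t => (∑' j, d j * φ j t)^2) μ01 :=
    integrable_bdd (hgaesm.pow 2) (fun t ht => by
      rw [abs_pow]; exact pow_le_pow_left₀ (abs_nonneg _) (hgbd t ht) 2)
  calc ∫ t in Set.Icc (0:ℝ) 1, ((∑' j, d j * φ j t) - κ)^2
      = ∫ t in Set.Icc (0:ℝ) 1,
          ((∑' j, d j * φ j t)^2 + ((-(2*κ)) * (∑' j, d j * φ j t) + κ^2)) :=
        integral_congr_ae (Filter.Eventually.of_forall fun t => by ring)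
    _ = (∑' j, d j ^ 2) + ((-(2*κ)) * 0 + κ^2) := by
        have hlin : Integrable (fun t => (-(2*κ)) * (∑' j, d j * φ j t)) μ01 :=
          hgint.const_mul _
        have hadd : Integrable (fun t => (-(2*κ)) * (∑' j, d j * φ j t) + κ^2) μ01 := by
          exact hlin.add (integrable_const _)
        rw [integral_add hg2int hadd, integral_add hlin (integrable_const _),
            MeasureTheory.integral_const_mul, integral_S_sq hB hmeas hbd horth hd,
            integral_S hB hmeas hbd hmean hd, integral_const01]
    _ = (∑' j, d j ^ 2) + κ^2 := by ring

include hB hmeas hbd horth in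
lemma integral_abs_le {d : ℕ → ℝ} (hd : Summable fun j => |d j|)
    (hd2 : Summable fun j => d j ^ 2) :
    ∫ t in Set.Icc (0:ℝ) 1, |∑' j, d j * φ j t| ≤ l2norm d := by
  have hgaesm := aesm_S hB hmeas hbd hd
  have hgbd : ∀ t ∈ Set.Icc (0:ℝ) 1, |∑' j, d j * φ j t| ≤ B * l1norm d :=
    fun t ht => abs_S_le hB hbd hd ht
  have hgint : Integrable (fun t => ∑' j, d j * φ j t) μ01 := integrable_bdd hgaesm hgbd
  have hg2int : Integrable (fun t => (∑' j, d j * φ j t)^2) μ01 :=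
    integrable_bdd (hgaesm.pow 2) (fun t ht => by
      rw [abs_pow]; exact pow_le_pow_left₀ (abs_nonneg _) (hgbd t ht) 2)
  by_cases hL0 : l2norm d = 0
  · have hsum0 : (∑' j, d j ^ 2) = 0 := by
      have := l2norm_sq d; rw [hL0] at this; simpa using this.symm
    have hz : ∀ j, d j = 0 := by
      intro j
      have hj := Summable.le_tsum hd2 j (fun i _ => sq_nonneg _)
      nlinarith [sq_nonneg (d j)]
    have hg0 : ∀ t : ℝ, (∑' j, d j * φ j t) = 0 := fun t => by simp [hz]
    rw [hL0]
    rw [integral_congr_ae (Filter.Eventually.of_forall (fun t => by rw [hg0 t, abs_zero]))]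
    simp
  · have hLpos : 0 < l2norm d := lt_of_le_of_ne (l2norm_nonneg _) (Ne.symm hL0)
    have point : ∀ t ∈ Set.Icc (0:ℝ) 1,
        |∑' j, d j * φ j t| ≤ (1/(2*l2norm d)) * (∑' j, d j * φ j t)^2 + l2norm d / 2 := by
      intro t ht
      have h2 := sq_abs (∑' j, d j * φ j t)
      have heq : (1/(2*l2norm d)) * (∑' j, d j * φ j t)^2 + l2norm d / 2
            - |∑' j, d j * φ j t|
          = ((|∑' j, d j * φ j t| - l2norm d)^2
              + ((∑' j, d j * φ j t)^2 - |∑' j, d j * φ j t|^2)) / (2*l2norm d) := by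
        field_simp
        ring
      have hnn : 0 ≤ ((|∑' j, d j * φ j t| - l2norm d)^2
          + ((∑' j, d j * φ j t)^2 - |∑' j, d j * φ j t|^2)) / (2*l2norm d) := by
        apply div_nonneg _ (by linarith)
        nlinarith [sq_nonneg (|∑' j, d j * φ j t| - l2norm d)]
      linarith [heq, hnn]
    have hR : Integrable (fun t =>
        (1/(2*l2norm d)) * (∑' j, d j * φ j t)^2 + l2norm d / 2) μ01 := by
      exact (hg2int.const_mul _).add (integrable_const _)
    calc ∫ t in Set.Icc (0:ℝ) 1, |∑' j, d j * φ j t|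
        ≤ ∫ t in Set.Icc (0:ℝ) 1,
            ((1/(2*l2norm d)) * (∑' j, d j * φ j t)^2 + l2norm d / 2) :=
          integral_mono01 hgint.abs hR point
      _ = (1/(2*l2norm d)) * l2norm d ^ 2 + l2norm d / 2 := by
          have hlin : Integrable (fun t => (1/(2*l2norm d)) * (∑' j, d j * φ j t)^2) μ01 :=
            hg2int.const_mul _
          rw [integral_add hlin (integrable_const _),
              MeasureTheory.integral_const_mul, integral_S_sq hB hmeas hbd horth hd,
              ← l2norm_sq, integral_const01]
      _ = l2norm d := by field_simp; ring

include hB hmeas hbd horth in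
lemma kappa_bound {θ1 θ2 : ℕ → ℝ} (h1 : memL1L2 θ1) (h2 : memL1L2 θ2) {M : ℝ}
    (hM1 : B * l1norm θ1 ≤ M) (hM2 : B * l1norm θ2 ≤ M) :
    |logNorm φ θ1 - logNorm φ θ2|
      ≤ Real.exp M * (Real.exp M * l2norm (fun j => θ1 j - θ2 j)) := by
  have hd1 : Summable fun j => |θ1 j - θ2 j| := by
    refine Summable.of_nonneg_of_le (fun j => abs_nonneg _) (fun j => ?_) (h1.1.add h2.1)
    rw [sub_eq_add_neg]
    exact (abs_add_le _ _).trans (by rw [abs_neg])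
  have hd2 : Summable fun j => (θ1 j - θ2 j) ^ 2 := by
    refine Summable.of_nonneg_of_le (fun j => sq_nonneg _) (fun j => ?_)
      ((h1.2.mul_left 2).add (h2.2.mul_left 2))
    nlinarith [sq_nonneg (θ1 j + θ2 j)]
  set L := l2norm (fun j => θ1 j - θ2 j) with hLdef
  have hL0 : 0 ≤ L := l2norm_nonneg _
  have hM0 : 0 ≤ M := le_trans (mul_nonneg hB (l1norm_nonneg θ1)) hM1
  have hint1 := integrable_exp_S hB hmeas hbd h1.1
  have hint2 := integrable_exp_S hB hmeas hbd h2.1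
  have hgaesm := aesm_S hB hmeas hbd hd1
  have hgbd : ∀ t ∈ Set.Icc (0:ℝ) 1,
      |∑' j, (θ1 j - θ2 j) * φ j t| ≤ B * l1norm (fun j => θ1 j - θ2 j) :=
    fun t ht => abs_S_le hB hbd hd1 ht
  have hgint : Integrable (fun t => ∑' j, (θ1 j - θ2 j) * φ j t) μ01 :=
    integrable_bdd hgaesm hgbd
  have hZ1pos := Zc_pos hB hmeas hbd h1.1
  have hZ2pos := Zc_pos hB hmeas hbd h2.1
  have hZ1ge : Real.exp (-M) ≤ ∫ t in Set.Icc (0:ℝ) 1, Real.exp (∑' j, θ1 j * φ j t) :=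
    le_trans (Real.exp_le_exp.2 (by linarith)) (Zc_ge hB hmeas hbd h1.1)
  have hZ2ge : Real.exp (-M) ≤ ∫ t in Set.Icc (0:ℝ) 1, Real.exp (∑' j, θ2 j * φ j t) :=
    le_trans (Real.exp_le_exp.2 (by linarith)) (Zc_ge hB hmeas hbd h2.1)
  -- bound on the difference of the normalizers
  have hZdiff : |(∫ t in Set.Icc (0:ℝ) 1, Real.exp (∑' j, θ1 j * φ j t))
      - ∫ t in Set.Icc (0:ℝ) 1, Real.exp (∑' j, θ2 j * φ j t)| ≤ Real.exp M * L := by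
    have hdiffint : Integrable
        (fun t => Real.exp (∑' j, θ1 j * φ j t) - Real.exp (∑' j, θ2 j * φ j t)) μ01 := by
      exact hint1.sub hint2
    have hstep1 : |(∫ t in Set.Icc (0:ℝ) 1, Real.exp (∑' j, θ1 j * φ j t))
        - ∫ t in Set.Icc (0:ℝ) 1, Real.exp (∑' j, θ2 j * φ j t)|
        ≤ ∫ t in Set.Icc (0:ℝ) 1,
            |Real.exp (∑' j, θ1 j * φ j t) - Real.exp (∑' j, θ2 j * φ j t)| := by
      rw [← integral_sub hint1 hint2]
      simpa [Real.norm_eq_abs] using norm_integral_le_integral_norm (μ := μ01)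
        (fun t => Real.exp (∑' j, θ1 j * φ j t) - Real.exp (∑' j, θ2 j * φ j t))
    have hstep2 : ∀ t ∈ Set.Icc (0:ℝ) 1,
        |Real.exp (∑' j, θ1 j * φ j t) - Real.exp (∑' j, θ2 j * φ j t)|
          ≤ Real.exp M * |∑' j, (θ1 j - θ2 j) * φ j t| := by
      intro t ht
      have ha : |∑' j, θ1 j * φ j t| ≤ M := le_trans (abs_S_le hB hbd h1.1 ht) hM1
      have hb : |∑' j, θ2 j * φ j t| ≤ M := le_trans (abs_S_le hB hbd h2.1 ht) hM2
      have := exp_abs_diff ha hb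
      rwa [sub_S hB hmeas hbd h1.1 h2.1 ht] at this
    calc |(∫ t in Set.Icc (0:ℝ) 1, Real.exp (∑' j, θ1 j * φ j t))
        - ∫ t in Set.Icc (0:ℝ) 1, Real.exp (∑' j, θ2 j * φ j t)|
        ≤ ∫ t in Set.Icc (0:ℝ) 1,
            |Real.exp (∑' j, θ1 j * φ j t) - Real.exp (∑' j, θ2 j * φ j t)| := hstep1
      _ ≤ ∫ t in Set.Icc (0:ℝ) 1, Real.exp M * |∑' j, (θ1 j - θ2 j) * φ j t| :=
          integral_mono01 hdiffint.abs (hgint.abs.const_mul _) hstep2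
      _ = Real.exp M * ∫ t in Set.Icc (0:ℝ) 1, |∑' j, (θ1 j - θ2 j) * φ j t| :=
          MeasureTheory.integral_const_mul _ _
      _ ≤ Real.exp M * L :=
          mul_le_mul_of_nonneg_left (integral_abs_le hB hmeas hbd horth hd1 hd2)
            (Real.exp_pos _).le
  have key : ∀ x y : ℝ, 0 < x → 0 < y → Real.exp (-M) ≤ y →
      |x - y| ≤ Real.exp M * L →
      Real.log x - Real.log y ≤ Real.exp M * (Real.exp M * L) := by
    intro x y hx hy hym hxy
    have hk1 : Real.log x - Real.log y = Real.log (x/y) := (Real.log_div hx.ne' hy.ne').symm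
    have hk2 : Real.log (x/y) ≤ x/y - 1 := Real.log_le_sub_one_of_pos (div_pos hx hy)
    have hk3 : x/y - 1 = (x - y)/y := by field_simp
    have hnum : x - y ≤ Real.exp M * L := le_trans (le_abs_self _) hxy
    have hk4 : (x - y)/y ≤ (Real.exp M * L)/y := by gcongr
    have hk5 : (Real.exp M * L)/y ≤ (Real.exp M * L) * Real.exp M := by
      rw [div_eq_mul_inv]
      refine mul_le_mul_of_nonneg_left ?_ (by positivity)
      have hinv : y⁻¹ ≤ (Real.exp (-M))⁻¹ := by
        apply inv_anti₀ (Real.exp_pos _) hym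
      rwa [Real.exp_neg, inv_inv] at hinv
    have hcomm : (Real.exp M * L) * Real.exp M = Real.exp M * (Real.exp M * L) := by ring
    linarith
  rw [abs_le]
  constructor
  · have := key _ _ hZ2pos hZ1pos hZ1ge (by rwa [abs_sub_comm] at hZdiff)
    simp only [logNorm]
    linarith
  · have := key _ _ hZ1pos hZ2pos hZ2ge hZdiff
    simp only [logNorm]
    linarith


lemma abs_sub_le' (a b : ℝ) : |a - b| ≤ |a| + |b| := by
  rw [sub_eq_add_neg]
  exact (abs_add_le _ _).trans (le_of_eq (by rw [abs_neg]))

include hB hmeas hbd horth hmean in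
lemma core (θ1 θ2 : ℕ → ℝ) (h1 : memL1L2 θ1) (h2 : memL1L2 θ2) :
    (4:ℝ)⁻¹ * Real.exp (-(6 * B * (l1norm θ1 + l1norm fun j => θ1 j - θ2 j))) *
        l2norm (fun j => θ1 j - θ2 j) ^ 2 ≤ hellSq (expDens φ θ1) (expDens φ θ2) ∧
      hellSq (expDens φ θ1) (expDens φ θ2) ≤
        4 * Real.exp (6 * B * (l1norm θ1 + l1norm fun j => θ1 j - θ2 j)) *
          l2norm (fun j => θ1 j - θ2 j) ^ 2 := by
  have hd1 : Summable fun j => |θ1 j - θ2 j| := by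
    refine Summable.of_nonneg_of_le (fun j => abs_nonneg _) (fun j => abs_sub_le' _ _)
      (h1.1.add h2.1)
  have hd2 : Summable fun j => (θ1 j - θ2 j) ^ 2 := by
    refine Summable.of_nonneg_of_le (fun j => sq_nonneg _) (fun j => ?_)
      ((h1.2.mul_left 2).add (h2.2.mul_left 2))
    nlinarith [sq_nonneg (θ1 j + θ2 j)]
  by_cases hL0 : l2norm (fun j => θ1 j - θ2 j) = 0
  · have hsum0 : (∑' j, (θ1 j - θ2 j) ^ 2) = 0 := by
      have := l2norm_sq (fun j => θ1 j - θ2 j)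
      rw [hL0] at this
      simpa using this.symm
    have hz : ∀ j, θ1 j = θ2 j := by
      intro j
      have hj := Summable.le_tsum hd2 j (fun i _ => sq_nonneg _)
      nlinarith [sq_nonneg (θ1 j - θ2 j)]
    have hθ : θ1 = θ2 := funext hz
    have hzero : hellSq (expDens φ θ1) (expDens φ θ2) = 0 := by
      rw [hθ]; simp [hellSq]
    rw [hzero, hL0]
    norm_num
  · set s := l1norm θ1 + l1norm (fun j => θ1 j - θ2 j) with hsdef
    set L := l2norm (fun j => θ1 j - θ2 j) with hLdef
    set κ := logNorm φ θ1 - logNorm φ θ2 with hκdef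
    clear_value s L κ
    have hl1d := l1norm_nonneg (fun j => θ1 j - θ2 j)
    have hl11 := l1norm_nonneg θ1
    have hs0 : 0 ≤ s := by rw [hsdef]; linarith
    have hl12 : l1norm θ2 ≤ s := by
      rw [hsdef]
      have hpt : ∀ j, |θ2 j| ≤ |θ1 j| + |θ1 j - θ2 j| := by
        intro j
        have h := abs_sub_le' (θ1 j) (θ1 j - θ2 j)
        have he : θ1 j - (θ1 j - θ2 j) = θ2 j := by ring
        rw [he] at h
        exact h
      calc l1norm θ2 ≤ ∑' j, (|θ1 j| + |θ1 j - θ2 j|) := Summable.tsum_le_tsum hpt h2.1 (h1.1.add hd1)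
        _ = l1norm θ1 + l1norm (fun j => θ1 j - θ2 j) := Summable.tsum_add h1.1 hd1
    have hM1 : B * l1norm θ1 ≤ B * s :=
      mul_le_mul_of_nonneg_left (by rw [hsdef]; linarith) hB
    have hM2 : B * l1norm θ2 ≤ B * s := mul_le_mul_of_nonneg_left hl12 hB
    have hBs0 : 0 ≤ B * s := mul_nonneg hB hs0
    have hκ : |κ| ≤ Real.exp (B*s) * (Real.exp (B*s) * L) := by
      rw [hκdef, hLdef]
      exact kappa_bound hB hmeas hbd horth h1 h2 hM1 hM2
    have hIκ := integral_sub_const_sq hB hmeas hbd horth hmean hd1 κ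
    have hL2 : L ^ 2 = ∑' j, (θ1 j - θ2 j) ^ 2 := by rw [hLdef]; exact l2norm_sq _
    -- measurability / integrability
    have hgaesm := aesm_S hB hmeas hbd hd1
    have hgκaesm : AEStronglyMeasurable
        (fun t => ((∑' j, (θ1 j - θ2 j) * φ j t) - κ)/2) μ01 :=
      (hgaesm.sub aestronglyMeasurable_const).mul aestronglyMeasurable_const
    have hquad' : Integrable (fun t => (((∑' j, (θ1 j - θ2 j) * φ j t) - κ)/2)^2) μ01 := by
      refine integrable_bdd (hgκaesm.pow 2)
        (C := ((B * l1norm (fun j => θ1 j - θ2 j) + |κ|)/2)^2) (fun t ht => ?_)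
      rw [abs_pow]
      refine pow_le_pow_left₀ (abs_nonneg _) ?_ 2
      rw [abs_div, abs_two]
      have h := abs_sub_le' (∑' j, (θ1 j - θ2 j) * φ j t) κ
      have hgb := abs_S_le hB hbd hd1 ht
      have hdiv : |(∑' j, (θ1 j - θ2 j) * φ j t) - κ|
          ≤ B * l1norm (fun j => θ1 j - θ2 j) + |κ| := by linarith
      linarith
    have habound : ∀ t ∈ Set.Icc (0:ℝ) 1,
        |((∑' j, θ1 j * φ j t) - logNorm φ θ1)/2| ≤ B*s := by
      intro t ht
      have hS := abs_S_le hB hbd h1.1 ht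
      have hc := abs_logNorm_le hB hmeas hbd h1.1
      have htri := abs_sub_le' (∑' j, θ1 j * φ j t) (logNorm φ θ1)
      rw [abs_div, abs_two]
      linarith
    have hbbound : ∀ t ∈ Set.Icc (0:ℝ) 1,
        |((∑' j, θ2 j * φ j t) - logNorm φ θ2)/2| ≤ B*s := by
      intro t ht
      have hS := abs_S_le hB hbd h2.1 ht
      have hc := abs_logNorm_le hB hmeas hbd h2.1
      have htri := abs_sub_le' (∑' j, θ2 j * φ j t) (logNorm φ θ2)
      rw [abs_div, abs_two]
      linarith
    have hexpaesm1 : AEStronglyMeasurable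
        (fun t => Real.exp (((∑' j, θ1 j * φ j t) - logNorm φ θ1)/2)) μ01 :=
      Real.continuous_exp.comp_aestronglyMeasurable
        (((aesm_S hB hmeas hbd h1.1).sub aestronglyMeasurable_const).mul
          aestronglyMeasurable_const)
    have hexpaesm2 : AEStronglyMeasurable
        (fun t => Real.exp (((∑' j, θ2 j * φ j t) - logNorm φ θ2)/2)) μ01 :=
      Real.continuous_exp.comp_aestronglyMeasurable
        (((aesm_S hB hmeas hbd h2.1).sub aestronglyMeasurable_const).mul
          aestronglyMeasurable_const)
    have hhint : Integrable (fun t =>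
        (Real.exp (((∑' j, θ1 j * φ j t) - logNorm φ θ1)/2)
          - Real.exp (((∑' j, θ2 j * φ j t) - logNorm φ θ2)/2))^2) μ01 := by
      refine integrable_bdd ((hexpaesm1.sub hexpaesm2).pow 2)
        (C := (2*Real.exp (B*s))^2) (fun t ht => ?_)
      rw [abs_pow]
      refine pow_le_pow_left₀ (abs_nonneg _) ?_ 2
      have e1 : Real.exp (((∑' j, θ1 j * φ j t) - logNorm φ θ1)/2) ≤ Real.exp (B*s) :=
        Real.exp_le_exp.2 (le_trans (le_abs_self _) (habound t ht))
      have e2 : Real.exp (((∑' j, θ2 j * φ j t) - logNorm φ θ2)/2) ≤ Real.exp (B*s) :=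
        Real.exp_le_exp.2 (le_trans (le_abs_self _) (hbbound t ht))
      have htri := abs_sub_le' (Real.exp (((∑' j, θ1 j * φ j t) - logNorm φ θ1)/2))
        (Real.exp (((∑' j, θ2 j * φ j t) - logNorm φ θ2)/2))
      rw [abs_of_pos (Real.exp_pos _), abs_of_pos (Real.exp_pos _)] at htri
      linarith
    have hhell : hellSq (expDens φ θ1) (expDens φ θ2)
        = ∫ t in Set.Icc (0:ℝ) 1,
            (Real.exp (((∑' j, θ1 j * φ j t) - logNorm φ θ1)/2)
              - Real.exp (((∑' j, θ2 j * φ j t) - logNorm φ θ2)/2))^2 := by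
      rw [hellSq]
      exact integral_congr_ae (Filter.Eventually.of_forall fun t => by
        simp only [expDens]
        rw [sqrt_exp', sqrt_exp'])
    have hI4 : ∫ t in Set.Icc (0:ℝ) 1, (((∑' j, (θ1 j - θ2 j) * φ j t) - κ)/2)^2
        = (L^2 + κ^2)/4 := by
      calc ∫ t in Set.Icc (0:ℝ) 1, (((∑' j, (θ1 j - θ2 j) * φ j t) - κ)/2)^2
          = ∫ t in Set.Icc (0:ℝ) 1, (1/4) * ((∑' j, (θ1 j - θ2 j) * φ j t) - κ)^2 :=
            integral_congr_ae (Filter.Eventually.of_forall fun t => by ring)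
        _ = (1/4) * ((∑' j, (θ1 j - θ2 j) ^ 2) + κ^2) := by
            rw [MeasureTheory.integral_const_mul, hIκ]
        _ = (L^2 + κ^2)/4 := by rw [hL2]; ring
    have hpt : ∀ t ∈ Set.Icc (0:ℝ) 1,
        Real.exp (-(2*(B*s))) * (((∑' j, (θ1 j - θ2 j) * φ j t) - κ)/2)^2
            ≤ (Real.exp (((∑' j, θ1 j * φ j t) - logNorm φ θ1)/2)
              - Real.exp (((∑' j, θ2 j * φ j t) - logNorm φ θ2)/2))^2
          ∧ (Real.exp (((∑' j, θ1 j * φ j t) - logNorm φ θ1)/2)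
              - Real.exp (((∑' j, θ2 j * φ j t) - logNorm φ θ2)/2))^2
            ≤ Real.exp (2*(B*s)) * (((∑' j, (θ1 j - θ2 j) * φ j t) - κ)/2)^2 := by
      intro t ht
      have hab : ((∑' j, θ1 j * φ j t) - logNorm φ θ1)/2
            - ((∑' j, θ2 j * φ j t) - logNorm φ θ2)/2
          = ((∑' j, (θ1 j - θ2 j) * φ j t) - κ)/2 := by
        rw [← sub_S hB hmeas hbd h1.1 h2.1 ht, hκdef]; ring
      have hsand := exp_sandwich (habound t ht) (hbbound t ht)
      rw [hab] at hsand
      exact hsand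
    constructor
    · have hee : Real.exp (-(6*B*s)) ≤ Real.exp (-(2*(B*s))) :=
        Real.exp_le_exp.2 (by nlinarith)
      calc (4:ℝ)⁻¹ * Real.exp (-(6*B*s)) * L^2
          ≤ Real.exp (-(2*(B*s))) * ((L^2 + κ^2)/4) := by
            nlinarith [mul_le_mul_of_nonneg_right hee (sq_nonneg L),
              mul_nonneg (Real.exp_pos (-(2*(B*s)))).le (sq_nonneg κ)]
        _ = ∫ t in Set.Icc (0:ℝ) 1,
              Real.exp (-(2*(B*s))) * (((∑' j, (θ1 j - θ2 j) * φ j t) - κ)/2)^2 := by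
            rw [MeasureTheory.integral_const_mul, hI4]
        _ ≤ hellSq (expDens φ θ1) (expDens φ θ2) := by
            rw [hhell]
            exact integral_mono01 (hquad'.const_mul _) hhint (fun t ht => (hpt t ht).1)
    · calc hellSq (expDens φ θ1) (expDens φ θ2)
          ≤ ∫ t in Set.Icc (0:ℝ) 1,
              Real.exp (2*(B*s)) * (((∑' j, (θ1 j - θ2 j) * φ j t) - κ)/2)^2 := by
            rw [hhell]
            exact integral_mono01 hhint (hquad'.const_mul _) (fun t ht => (hpt t ht).2)
        _ = Real.exp (2*(B*s)) * ((L^2 + κ^2)/4) := by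
            rw [MeasureTheory.integral_const_mul, hI4]
        _ ≤ 4 * Real.exp (6*B*s) * L^2 := by
            have hone : (1:ℝ) ≤ Real.exp (2*(B*s)) := Real.one_le_exp (by nlinarith)
            have hE2 : Real.exp (B*s) * Real.exp (B*s) = Real.exp (2*(B*s)) := by
              rw [exp_mul_exp]; ring_nf
            have hE6 : Real.exp (2*(B*s)) * (Real.exp (2*(B*s)) * Real.exp (2*(B*s)))
                = Real.exp (6*B*s) := by
              rw [exp_mul_exp, exp_mul_exp]; ring_nf
            have hκ2 : κ^2 ≤ Real.exp (2*(B*s)) * Real.exp (2*(B*s)) * L^2 := by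
              calc κ^2 = |κ|^2 := (sq_abs κ).symm
                _ ≤ (Real.exp (B*s) * (Real.exp (B*s) * L))^2 :=
                    pow_le_pow_left₀ (abs_nonneg _) hκ 2
                _ = (Real.exp (B*s) * Real.exp (B*s))
                    * ((Real.exp (B*s) * Real.exp (B*s)) * L^2) := by ring
                _ = Real.exp (2*(B*s)) * Real.exp (2*(B*s)) * L^2 := by rw [hE2]; ring
            have h11 : (1:ℝ) ≤ Real.exp (2*(B*s)) * Real.exp (2*(B*s)) := by nlinarith
            have step1 : Real.exp (2*(B*s)) * κ^2
                ≤ Real.exp (2*(B*s)) * (Real.exp (2*(B*s)) * Real.exp (2*(B*s)) * L^2) :=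
              mul_le_mul_of_nonneg_left hκ2 (Real.exp_pos _).le
            have step2 : Real.exp (2*(B*s)) * L^2
                ≤ Real.exp (2*(B*s)) * (Real.exp (2*(B*s)) * Real.exp (2*(B*s))) * L^2 := by
              nlinarith [h11, mul_nonneg (Real.exp_pos (2*(B*s))).le (sq_nonneg L)]
            rw [← hE6]
            nlinarith [step1, step2,
              mul_nonneg (mul_nonneg (mul_nonneg (Real.exp_pos (2*(B*s))).le
                (Real.exp_pos (2*(B*s))).le) (Real.exp_pos (2*(B*s))).le) (sq_nonneg L)]


include hB hmeas hbd in
lemma oneside_logNorm {a b : ℕ → ℝ} (ha : Summable fun j => |a j|)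
    (hb : Summable fun j => |b j|) :
    logNorm φ a ≤ logNorm φ b + B * l1norm (fun j => a j - b j) := by
  have hd : Summable fun j => |a j - b j| :=
    Summable.of_nonneg_of_le (fun j => abs_nonneg _) (fun j => abs_sub_le' _ _) (ha.add hb)
  have point : ∀ t ∈ Set.Icc (0:ℝ) 1, Real.exp (∑' j, a j * φ j t)
      ≤ Real.exp (B * l1norm (fun j => a j - b j)) * Real.exp (∑' j, b j * φ j t) := by
    intro t ht
    rw [exp_mul_exp]
    apply Real.exp_le_exp.2
    have hsub := sub_S hB hmeas hbd ha hb ht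
    have habs := abs_S_le hB hbd hd ht
    linarith [le_abs_self (∑' j, (a j - b j) * φ j t)]
  have hZ : (∫ t in Set.Icc (0:ℝ) 1, Real.exp (∑' j, a j * φ j t))
      ≤ Real.exp (B * l1norm (fun j => a j - b j))
        * ∫ t in Set.Icc (0:ℝ) 1, Real.exp (∑' j, b j * φ j t) := by
    calc (∫ t in Set.Icc (0:ℝ) 1, Real.exp (∑' j, a j * φ j t))
        ≤ ∫ t in Set.Icc (0:ℝ) 1, Real.exp (B * l1norm (fun j => a j - b j))
            * Real.exp (∑' j, b j * φ j t) :=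
          integral_mono01 (integrable_exp_S hB hmeas hbd ha)
            ((integrable_exp_S hB hmeas hbd hb).const_mul _) point
      _ = Real.exp (B * l1norm (fun j => a j - b j))
            * ∫ t in Set.Icc (0:ℝ) 1, Real.exp (∑' j, b j * φ j t) :=
          MeasureTheory.integral_const_mul _ _
  have hlog := Real.log_le_log (Zc_pos hB hmeas hbd ha) hZ
  rw [Real.log_mul (Real.exp_pos _).ne' (Zc_pos hB hmeas hbd hb).ne', Real.log_exp] at hlog
  calc logNorm φ a
      = Real.log (∫ t in Set.Icc (0:ℝ) 1, Real.exp (∑' j, a j * φ j t)) := rfl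
    _ ≤ B * l1norm (fun j => a j - b j)
        + Real.log (∫ t in Set.Icc (0:ℝ) 1, Real.exp (∑' j, b j * φ j t)) := hlog
    _ = logNorm φ b + B * l1norm (fun j => a j - b j) := by rw [logNorm]; ring

include hB hmeas hbd in
lemma kappa_cheap {θ1 θ2 : ℕ → ℝ} (h1 : Summable fun j => |θ1 j|)
    (h2 : Summable fun j => |θ2 j|) :
    |logNorm φ θ1 - logNorm φ θ2| ≤ B * l1norm (fun j => θ1 j - θ2 j) := by
  have h12 := oneside_logNorm hB hmeas hbd h1 h2
  have h21 := oneside_logNorm hB hmeas hbd h2 h1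
  have heq : l1norm (fun j => θ2 j - θ1 j) = l1norm (fun j => θ1 j - θ2 j) := by
    simp only [l1norm]
    exact tsum_congr fun j => abs_sub_comm _ _
  rw [heq] at h21
  rw [abs_le]
  constructor <;> linarith

include hB hmeas hbd in
lemma crude (θ1 θ2 : ℕ → ℝ) (h1 : memL1L2 θ1) (h2 : memL1L2 θ2)
    (hr : B * l1norm (fun j => θ1 j - θ2 j) ≤ B) :
    hellSq (expDens φ θ1) (expDens φ θ2)
      ≤ Real.exp (2*B) * (B * l1norm (fun j => θ1 j - θ2 j))^2 := by
  have hd1 : Summable fun j => |θ1 j - θ2 j| :=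
    Summable.of_nonneg_of_le (fun j => abs_nonneg _) (fun j => abs_sub_le' _ _)
      (h1.1.add h2.1)
  have hκc : |logNorm φ θ1 - logNorm φ θ2| ≤ B * l1norm (fun j => θ1 j - θ2 j) :=
    kappa_cheap hB hmeas hbd h1.1 h2.1
  have pointc : ∀ t ∈ Set.Icc (0:ℝ) 1,
      (Real.sqrt (expDens φ θ1 t) - Real.sqrt (expDens φ θ2 t))^2
        ≤ expDens φ θ1 t
            * (Real.exp (2*B) * (B * l1norm (fun j => θ1 j - θ2 j))^2) := by
    intro t ht
    have hsq1 : Real.sqrt (expDens φ θ1 t)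
        = Real.exp (((∑' j, θ1 j * φ j t) - logNorm φ θ1)/2) := by
      simp only [expDens]; rw [sqrt_exp']
    have hsq2 : Real.sqrt (expDens φ θ2 t)
        = Real.exp (((∑' j, θ2 j * φ j t) - logNorm φ θ2)/2) := by
      simp only [expDens]; rw [sqrt_exp']
    rw [hsq1, hsq2]
    have hab : ((∑' j, θ1 j * φ j t) - logNorm φ θ1)/2
          - ((∑' j, θ2 j * φ j t) - logNorm φ θ2)/2
        = ((∑' j, (θ1 j - θ2 j) * φ j t) - (logNorm φ θ1 - logNorm φ θ2))/2 := by
      rw [← sub_S hB hmeas hbd h1.1 h2.1 ht]; ring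
    have habs : |((∑' j, θ1 j * φ j t) - logNorm φ θ1)/2
          - ((∑' j, θ2 j * φ j t) - logNorm φ θ2)/2|
        ≤ B * l1norm (fun j => θ1 j - θ2 j) := by
      rw [hab, abs_div, abs_two]
      have h := abs_sub_le' (∑' j, (θ1 j - θ2 j) * φ j t)
        (logNorm φ θ1 - logNorm φ θ2)
      linarith [abs_S_le hB hbd hd1 ht]
    refine le_trans (exp_sq_diff _ _) ?_
    have hexp2a : Real.exp (2*(((∑' j, θ1 j * φ j t) - logNorm φ θ1)/2))
        = expDens φ θ1 t := by
      simp only [expDens]; congr 1; ring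
    rw [← hexp2a]
    refine mul_le_mul_of_nonneg_left ?_ (Real.exp_pos _).le
    refine mul_le_mul ?_ ?_ (sq_nonneg _) (Real.exp_pos _).le
    · exact Real.exp_le_exp.2 (by linarith)
    · have := pow_le_pow_left₀ (abs_nonneg _) habs 2
      rwa [sq_abs] at this
  have hf1int : Integrable (expDens φ θ1) μ01 := by
    refine integrable_bdd (Real.continuous_exp.comp_aestronglyMeasurable
      ((aesm_S hB hmeas hbd h1.1).sub aestronglyMeasurable_const))
      (C := Real.exp (2 * (B * l1norm θ1))) (fun t ht => ?_)
    simp only [expDens]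
    rw [abs_of_pos (Real.exp_pos _)]
    apply Real.exp_le_exp.2
    have hS := abs_S_le hB hbd h1.1 ht
    have hc := abs_logNorm_le hB hmeas hbd h1.1
    have htri := abs_sub_le' (∑' j, θ1 j * φ j t) (logNorm φ θ1)
    linarith [le_abs_self ((∑' j, θ1 j * φ j t) - logNorm φ θ1)]
  have hexpaesm1 : AEStronglyMeasurable
      (fun t => Real.exp (((∑' j, θ1 j * φ j t) - logNorm φ θ1)/2)) μ01 :=
    Real.continuous_exp.comp_aestronglyMeasurable
      (((aesm_S hB hmeas hbd h1.1).sub aestronglyMeasurable_const).mul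
        aestronglyMeasurable_const)
  have hexpaesm2 : AEStronglyMeasurable
      (fun t => Real.exp (((∑' j, θ2 j * φ j t) - logNorm φ θ2)/2)) μ01 :=
    Real.continuous_exp.comp_aestronglyMeasurable
      (((aesm_S hB hmeas hbd h2.1).sub aestronglyMeasurable_const).mul
        aestronglyMeasurable_const)
  have haesmH : AEStronglyMeasurable
      (fun t => (Real.sqrt (expDens φ θ1 t) - Real.sqrt (expDens φ θ2 t))^2) μ01 := by
    have : (fun t => (Real.sqrt (expDens φ θ1 t) - Real.sqrt (expDens φ θ2 t))^2)
        = fun t => (Real.exp (((∑' j, θ1 j * φ j t) - logNorm φ θ1)/2)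
            - Real.exp (((∑' j, θ2 j * φ j t) - logNorm φ θ2)/2))^2 := by
      funext t
      simp only [expDens]
      rw [sqrt_exp', sqrt_exp']
    rw [this]
    exact (hexpaesm1.sub hexpaesm2).pow 2
  have hLHSint : Integrable
      (fun t => (Real.sqrt (expDens φ θ1 t) - Real.sqrt (expDens φ θ2 t))^2) μ01 := by
    refine integrable_bdd haesmH
      (C := (2*Real.exp (B * l1norm θ1 + B * l1norm θ2))^2) (fun t ht => ?_)
    have hS1 := abs_S_le hB hbd h1.1 ht
    have hc1 := abs_logNorm_le hB hmeas hbd h1.1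
    have hS2 := abs_S_le hB hbd h2.1 ht
    have hc2 := abs_logNorm_le hB hmeas hbd h2.1
    have hsq1 : Real.sqrt (expDens φ θ1 t)
        = Real.exp (((∑' j, θ1 j * φ j t) - logNorm φ θ1)/2) := by
      simp only [expDens]; rw [sqrt_exp']
    have hsq2 : Real.sqrt (expDens φ θ2 t)
        = Real.exp (((∑' j, θ2 j * φ j t) - logNorm φ θ2)/2) := by
      simp only [expDens]; rw [sqrt_exp']
    rw [hsq1, hsq2, abs_pow]
    refine pow_le_pow_left₀ (abs_nonneg _) ?_ 2
    have e1 : Real.exp (((∑' j, θ1 j * φ j t) - logNorm φ θ1)/2)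
        ≤ Real.exp (B * l1norm θ1 + B * l1norm θ2) := by
      apply Real.exp_le_exp.2
      have htri := abs_sub_le' (∑' j, θ1 j * φ j t) (logNorm φ θ1)
      have hnn : 0 ≤ B * l1norm θ2 := mul_nonneg hB (l1norm_nonneg _)
      have := le_abs_self ((∑' j, θ1 j * φ j t) - logNorm φ θ1)
      linarith
    have e2 : Real.exp (((∑' j, θ2 j * φ j t) - logNorm φ θ2)/2)
        ≤ Real.exp (B * l1norm θ1 + B * l1norm θ2) := by
      apply Real.exp_le_exp.2
      have htri := abs_sub_le' (∑' j, θ2 j * φ j t) (logNorm φ θ2)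
      have hnn : 0 ≤ B * l1norm θ1 := mul_nonneg hB (l1norm_nonneg _)
      have := le_abs_self ((∑' j, θ2 j * φ j t) - logNorm φ θ2)
      linarith
    have htri := abs_sub_le'
      (Real.exp (((∑' j, θ1 j * φ j t) - logNorm φ θ1)/2))
      (Real.exp (((∑' j, θ2 j * φ j t) - logNorm φ θ2)/2))
    rw [abs_of_pos (Real.exp_pos _), abs_of_pos (Real.exp_pos _)] at htri
    linarith
  calc hellSq (expDens φ θ1) (expDens φ θ2)
      = ∫ t in Set.Icc (0:ℝ) 1,
          (Real.sqrt (expDens φ θ1 t) - Real.sqrt (expDens φ θ2 t))^2 := rfl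
    _ ≤ ∫ t in Set.Icc (0:ℝ) 1, expDens φ θ1 t
          * (Real.exp (2*B) * (B * l1norm (fun j => θ1 j - θ2 j))^2) :=
        integral_mono01 hLHSint (hf1int.mul_const _) pointc
    _ = (∫ t in Set.Icc (0:ℝ) 1, expDens φ θ1 t)
          * (Real.exp (2*B) * (B * l1norm (fun j => θ1 j - θ2 j))^2) :=
        integral_mul_const _ _
    _ = Real.exp (2*B) * (B * l1norm (fun j => θ1 j - θ2 j))^2 := by
        rw [integral_expDens hB hmeas hbd h1.1, one_mul]

end basic

lemma pad_mem (k : ℕ) (v : Fin k → ℝ) : memL1L2 (pad k v) := by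
  constructor <;>
    refine summable_of_ne_finset_zero (s := Finset.range k) (fun j hj => ?_) <;>
    · have h : ¬ j < k := by simpa [Finset.mem_range] using hj
      simp [pad, h]

lemma sum_abs_le_sqrt (k : ℕ) (d : ℕ → ℝ) (hd2 : Summable fun j => d j ^ 2) :
    ∑ j ∈ Finset.range k, |d j| ≤ Real.sqrt k * l2norm d := by
  have hCS : (∑ j ∈ Finset.range k, |d j|)^2
      ≤ (k:ℝ) * ∑ j ∈ Finset.range k, |d j|^2 := by
    simpa using sq_sum_le_card_mul_sum_sq (s := Finset.range k) (f := fun j => |d j|)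
  have hsum_le : (∑ j ∈ Finset.range k, |d j|^2) ≤ ∑' j, d j ^ 2 := by
    calc (∑ j ∈ Finset.range k, |d j|^2)
        = ∑ j ∈ Finset.range k, d j ^ 2 := Finset.sum_congr rfl fun j _ => sq_abs _
      _ ≤ ∑' j, d j ^ 2 := Summable.sum_le_tsum _ (fun i _ => sq_nonneg _) hd2
  have hnn : 0 ≤ ∑ j ∈ Finset.range k, |d j| := Finset.sum_nonneg fun j _ => abs_nonneg _
  have hrhs : 0 ≤ Real.sqrt k * l2norm d :=
    mul_nonneg (Real.sqrt_nonneg _) (l2norm_nonneg _)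
  rw [← Real.sqrt_sq hnn, ← Real.sqrt_sq hrhs]
  apply Real.sqrt_le_sqrt
  have he : (Real.sqrt k * l2norm d)^2 = (k:ℝ) * l2norm d ^ 2 := by
    rw [mul_pow, Real.sq_sqrt (by positivity : (0:ℝ) ≤ (k:ℝ))]
  rw [he, l2norm_sq]
  calc (∑ j ∈ Finset.range k, |d j|)^2
      ≤ (k:ℝ) * ∑ j ∈ Finset.range k, |d j|^2 := hCS
    _ ≤ (k:ℝ) * ∑' j, d j ^ 2 := mul_le_mul_of_nonneg_left hsum_le (by positivity)

lemma l1_le_sqrt_mul_l2_of_support (k : ℕ) (d : ℕ → ℝ)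
    (hd : ∀ j, k ≤ j → d j = 0) (hd2 : Summable fun j => d j ^ 2) :
    l1norm d ≤ Real.sqrt k * l2norm d := by
  have hfin : ∀ j ∉ Finset.range k, |d j| = 0 := fun j hj => by
    rw [hd j (by simpa [Finset.mem_range, not_lt] using hj), abs_zero]
  have h1 : l1norm d = ∑ j ∈ Finset.range k, |d j| := tsum_eq_sum hfin
  rw [h1]
  exact sum_abs_le_sqrt k d hd2


lemma memL1L2_sub {a b : ℕ → ℝ} (ha : memL1L2 a) (hb : memL1L2 b) :
    memL1L2 (fun j => a j - b j) := by
  constructor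
  · exact Summable.of_nonneg_of_le (fun j => abs_nonneg _) (fun j => abs_sub_le' _ _)
      (ha.1.add hb.1)
  · refine Summable.of_nonneg_of_le (fun j => sq_nonneg _) (fun j => ?_)
      ((ha.2.mul_left 2).add (hb.2.mul_left 2))
    show (a j - b j) ^ 2 ≤ 2 * a j ^ 2 + 2 * b j ^ 2
    nlinarith [sq_nonneg (a j + b j)]

lemma l1_d_bound (k : ℕ) (v : Fin k → ℝ) (θ0 : ℕ → ℝ) (hθ0 : memL1L2 θ0)
    (hd1 : Summable fun j => |pad k v j - θ0 j|)
    (hd2 : Summable fun j => (pad k v j - θ0 j)^2) :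
    l1norm (fun j => pad k v j - θ0 j)
      ≤ Real.sqrt k * l2norm (fun j => pad k v j - θ0 j) + l1norm θ0 := by
  classical
  set e : ℕ → ℝ := fun j => if j < k then pad k v j - θ0 j else 0 with hedef
  set f : ℕ → ℝ := fun j => if j < k then 0 else -θ0 j with hfdef
  have hef : ∀ j, pad k v j - θ0 j = e j + f j := by
    intro j
    by_cases h : j < k
    · simp [hedef, hfdef, h]
    · simp [hedef, hfdef, h, pad]
  have hesum : Summable fun j => |e j| :=
    summable_of_ne_finset_zero (s := Finset.range k) (fun j hj => by
      have h : ¬ j < k := by simpa [Finset.mem_range] using hj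
      simp [hedef, h])
  have hfsum : Summable fun j => |f j| := by
    refine Summable.of_nonneg_of_le (fun j => abs_nonneg _) (fun j => ?_) hθ0.1
    by_cases h : j < k <;> simp [hfdef, h]
  have step1 : l1norm (fun j => pad k v j - θ0 j) ≤ (∑' j, |e j|) + ∑' j, |f j| := by
    calc l1norm (fun j => pad k v j - θ0 j)
        ≤ ∑' j, (|e j| + |f j|) :=
          Summable.tsum_le_tsum (fun j => by
            show |pad k v j - θ0 j| ≤ |e j| + |f j|
            rw [hef j]; exact abs_add_le _ _) hd1 (hesum.add hfsum)
      _ = (∑' j, |e j|) + ∑' j, |f j| := Summable.tsum_add hesum hfsum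
  have step2 : (∑' j, |e j|) ≤ Real.sqrt k * l2norm (fun j => pad k v j - θ0 j) := by
    have h1 : (∑' j, |e j|) = ∑ j ∈ Finset.range k, |e j| := tsum_eq_sum (fun j hj => by
      have h : ¬ j < k := by simpa [Finset.mem_range] using hj
      simp [hedef, h])
    have h2 : (∑ j ∈ Finset.range k, |e j|)
        = ∑ j ∈ Finset.range k, |pad k v j - θ0 j| :=
      Finset.sum_congr rfl (fun j hj => by
        have h : j < k := by simpa [Finset.mem_range] using hj
        simp [hedef, h])
    rw [h1, h2]
    exact sum_abs_le_sqrt k _ hd2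
  have step3 : (∑' j, |f j|) ≤ l1norm θ0 := by
    refine Summable.tsum_le_tsum (fun j => ?_) hfsum hθ0.1
    by_cases h : j < k <;> simp [hfdef, h]
  exact le_trans step1 (add_le_add step2 step3)

end HellAux

/-- **Supplementary Lemma (Hellinger–ℓ₂ comparison for exponential families).** -/
theorem hellinger_l2_comparison_expFamily
    (φ : ℕ → ℝ → ℝ)
    (hφmeas : ∀ j, Measurable (φ j))
    (hφbd : ∃ B : ℝ, ∀ (j : ℕ), ∀ t ∈ Set.Icc (0 : ℝ) 1, |φ j t| ≤ B)
    (hφorth : ∀ i j : ℕ, (∫ t in Set.Icc (0 : ℝ) 1, φ i t * φ j t) =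
      if i = j then 1 else 0)
    (hφmean : ∀ j : ℕ, (∫ t in Set.Icc (0 : ℝ) 1, φ j t) = 0) :
    -- (i) two-sided comparison, and its consequence
    ((∃ ct : ℝ, 0 < ct ∧ ∀ A : ℝ, 0 < A → ∃ CA : ℝ, 0 < CA ∧
        ∀ θ1 θ2 : ℕ → ℝ, memL1L2 θ1 → memL1L2 θ2 →
          l2norm (fun j => θ1 j - θ2 j) ≤ A →
          CA⁻¹ * Real.exp (-(ct * (l1norm θ1 + l1norm (fun j => θ1 j - θ2 j)))) *
              l2norm (fun j => θ1 j - θ2 j) ^ 2 ≤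
            hellSq (expDens φ θ1) (expDens φ θ2) ∧
          hellSq (expDens φ θ1) (expDens φ θ2) ≤
            CA * Real.exp (ct * (l1norm θ1 + l1norm (fun j => θ1 j - θ2 j))) *
              l2norm (fun j => θ1 j - θ2 j) ^ 2) ∧
      (∀ c L : ℝ, 0 < c → 0 < L → ∃ C' : ℝ, 1 ≤ C' ∧
        ∀ k : ℕ, 1 ≤ k → ∀ θ0 : ℕ → ℝ, memL1L2 θ0 → l1norm θ0 ≤ L →
          ∀ v : Fin k → ℝ,
            l2norm (fun j => pad k v j - θ0 j) ≤ c / Real.sqrt k →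
            C'⁻¹ * l2norm (fun j => pad k v j - θ0 j) ≤
                hell (expDens φ (pad k v)) (expDens φ θ0) ∧
              hell (expDens φ (pad k v)) (expDens φ θ0) ≤
                C' * l2norm (fun j => pad k v j - θ0 j))) ∧
    -- (ii) crude Hellinger bound
    (∃ δ C : ℝ, 0 < δ ∧ 0 < C ∧ ∀ k : ℕ, 1 ≤ k → ∀ v v' : Fin k → ℝ,
      l2norm (fun j => pad k v j - pad k v' j) ≤ δ / Real.sqrt k →
      hell (expDens φ (pad k v)) (expDens φ (pad k v')) ≤
        C * Real.sqrt k * l2norm (fun j => pad k v j - pad k v' j)) := by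
  classical
  obtain ⟨B0, hB0⟩ := hφbd
  have hB1 : (1:ℝ) ≤ max B0 1 := le_max_right _ _
  set B := max B0 1 with hBdef
  have hB : (0:ℝ) ≤ B := by linarith
  have hbd : ∀ (j : ℕ), ∀ t ∈ Set.Icc (0:ℝ) 1, |φ j t| ≤ B :=
    fun j t ht => (hB0 j t ht).trans (le_max_left _ _)
  constructor
  · constructor
    · refine ⟨6*B, by linarith, fun A hA => ⟨4, by norm_num,
        fun θ1 θ2 h1 h2 _ => ?_⟩⟩
      exact HellAux.core hB hφmeas hbd hφorth hφmean θ1 θ2 h1 h2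
    · intro c L0 hc hL0
      refine ⟨2*Real.exp (3*B*(3*L0+2*c)), ?_, ?_⟩
      · have h0 : (0:ℝ) ≤ 3*B*(3*L0+2*c) := by nlinarith
        have := Real.one_le_exp h0
        linarith
      · intro k hk θ0 hθ0 hθ0L v hv
        have hkR : (1:ℝ) ≤ Real.sqrt k := by
          rw [show (1:ℝ) = Real.sqrt 1 by simp]
          exact Real.sqrt_le_sqrt (by exact_mod_cast hk)
        have hmem1 : memL1L2 (pad k v) := HellAux.pad_mem k v
        have hdmem : memL1L2 (fun j => pad k v j - θ0 j) :=
          HellAux.memL1L2_sub hmem1 hθ0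
        have hl1d : l1norm (fun j => pad k v j - θ0 j) ≤ c + L0 := by
          have h := HellAux.l1_d_bound k v θ0 hθ0 hdmem.1 hdmem.2
          have h2 : Real.sqrt k * l2norm (fun j => pad k v j - θ0 j)
              ≤ Real.sqrt k * (c / Real.sqrt k) :=
            mul_le_mul_of_nonneg_left hv (Real.sqrt_nonneg _)
          have h3 : Real.sqrt k * (c / Real.sqrt k) = c := by
            field_simp
          linarith
        have hl1θ1 : l1norm (pad k v) ≤ L0 + (c + L0) := by
          have hpt : ∀ j, |pad k v j| ≤ |θ0 j| + |pad k v j - θ0 j| := fun j => by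
            simpa using abs_add_le (θ0 j) (pad k v j - θ0 j)
          calc l1norm (pad k v)
              ≤ ∑' j, (|θ0 j| + |pad k v j - θ0 j|) :=
                Summable.tsum_le_tsum hpt hmem1.1 (hθ0.1.add hdmem.1)
            _ = l1norm θ0 + l1norm (fun j => pad k v j - θ0 j) :=
                Summable.tsum_add hθ0.1 hdmem.1
            _ ≤ L0 + (c + L0) := add_le_add hθ0L hl1d
        have hcore := HellAux.core hB hφmeas hbd hφorth hφmean (pad k v) θ0 hmem1 hθ0
        have hD0 : 0 ≤ l2norm (fun j => pad k v j - θ0 j) := HellAux.l2norm_nonneg _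
        have hmonlow : Real.exp (-(6*B*(3*L0+2*c)))
            ≤ Real.exp (-(6 * B * (l1norm (pad k v)
                + l1norm fun j => pad k v j - θ0 j))) :=
          Real.exp_le_exp.2 (by nlinarith [HellAux.l1norm_nonneg (pad k v),
            HellAux.l1norm_nonneg (fun j => pad k v j - θ0 j)])
        have hmonup : Real.exp (6 * B * (l1norm (pad k v)
              + l1norm fun j => pad k v j - θ0 j))
            ≤ Real.exp (6*B*(3*L0+2*c)) :=
          Real.exp_le_exp.2 (by nlinarith [HellAux.l1norm_nonneg (pad k v),
            HellAux.l1norm_nonneg (fun j => pad k v j - θ0 j)])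
        have e6 : Real.exp (3*B*(3*L0+2*c)) * Real.exp (3*B*(3*L0+2*c))
            = Real.exp (6*B*(3*L0+2*c)) := by rw [HellAux.exp_mul_exp]; ring_nf
        constructor
        · have hEq : ((2*Real.exp (3*B*(3*L0+2*c)))⁻¹)^2
              = (4:ℝ)⁻¹ * Real.exp (-(6*B*(3*L0+2*c))) := by
            have hne : Real.exp (3*B*(3*L0+2*c)) ≠ 0 := (Real.exp_pos _).ne'
            have h9 : Real.exp (-(6*B*(3*L0+2*c)))
                = (Real.exp (3*B*(3*L0+2*c)) * Real.exp (3*B*(3*L0+2*c)))⁻¹ := by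
              rw [e6, Real.exp_neg]
            rw [h9]
            field_simp
            ring
          have hsq : ((2*Real.exp (3*B*(3*L0+2*c)))⁻¹
                * l2norm (fun j => pad k v j - θ0 j))^2
              ≤ hellSq (expDens φ (pad k v)) (expDens φ θ0) := by
            calc ((2*Real.exp (3*B*(3*L0+2*c)))⁻¹
                  * l2norm (fun j => pad k v j - θ0 j))^2
                = ((2*Real.exp (3*B*(3*L0+2*c)))⁻¹)^2
                    * l2norm (fun j => pad k v j - θ0 j)^2 := by ring
              _ = (4:ℝ)⁻¹ * Real.exp (-(6*B*(3*L0+2*c)))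
                    * l2norm (fun j => pad k v j - θ0 j)^2 := by rw [hEq]
              _ ≤ (4:ℝ)⁻¹ * Real.exp (-(6 * B * (l1norm (pad k v)
                    + l1norm fun j => pad k v j - θ0 j)))
                    * l2norm (fun j => pad k v j - θ0 j)^2 := by
                  nlinarith [hmonlow, sq_nonneg (l2norm (fun j => pad k v j - θ0 j))]
              _ ≤ hellSq (expDens φ (pad k v)) (expDens φ θ0) := hcore.1
          have hy : 0 ≤ (2*Real.exp (3*B*(3*L0+2*c)))⁻¹
              * l2norm (fun j => pad k v j - θ0 j) :=
            mul_nonneg (inv_nonneg.2 (by positivity)) hD0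
          exact (Real.le_sqrt hy (le_trans (sq_nonneg _) hsq)).2 hsq
        · have hsqU : hellSq (expDens φ (pad k v)) (expDens φ θ0)
              ≤ ((2*Real.exp (3*B*(3*L0+2*c)))
                  * l2norm (fun j => pad k v j - θ0 j))^2 := by
            calc hellSq (expDens φ (pad k v)) (expDens φ θ0)
                ≤ 4 * Real.exp (6 * B * (l1norm (pad k v)
                    + l1norm fun j => pad k v j - θ0 j))
                    * l2norm (fun j => pad k v j - θ0 j)^2 := hcore.2
              _ ≤ 4 * Real.exp (6*B*(3*L0+2*c))
                    * l2norm (fun j => pad k v j - θ0 j)^2 := by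
                  nlinarith [hmonup, sq_nonneg (l2norm (fun j => pad k v j - θ0 j))]
              _ = ((2*Real.exp (3*B*(3*L0+2*c)))
                    * l2norm (fun j => pad k v j - θ0 j))^2 := by rw [← e6]; ring
          calc hell (expDens φ (pad k v)) (expDens φ θ0)
              = Real.sqrt (hellSq (expDens φ (pad k v)) (expDens φ θ0)) := rfl
            _ ≤ Real.sqrt (((2*Real.exp (3*B*(3*L0+2*c)))
                  * l2norm (fun j => pad k v j - θ0 j))^2) := Real.sqrt_le_sqrt hsqU
            _ = (2*Real.exp (3*B*(3*L0+2*c)))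
                  * l2norm (fun j => pad k v j - θ0 j) :=
                Real.sqrt_sq (mul_nonneg (by positivity) hD0)
  · refine ⟨1, B * Real.exp B, one_pos,
      mul_pos (by linarith) (Real.exp_pos B), fun k hk v v' hvv' => ?_⟩
    have hkR : (1:ℝ) ≤ Real.sqrt k := by
      rw [show (1:ℝ) = Real.sqrt 1 by simp]
      exact Real.sqrt_le_sqrt (by exact_mod_cast hk)
    have hmem1 : memL1L2 (pad k v) := HellAux.pad_mem k v
    have hmem2 : memL1L2 (pad k v') := HellAux.pad_mem k v'
    have hdmem : memL1L2 (fun j => pad k v j - pad k v' j) :=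
      HellAux.memL1L2_sub hmem1 hmem2
    have hl1 : l1norm (fun j => pad k v j - pad k v' j)
        ≤ Real.sqrt k * l2norm (fun j => pad k v j - pad k v' j) :=
      HellAux.l1_le_sqrt_mul_l2_of_support k _ (fun j hj => by
        have h : ¬ j < k := not_lt.2 hj
        simp [pad, h]) hdmem.2
    have hD0 : 0 ≤ l2norm (fun j => pad k v j - pad k v' j) := HellAux.l2norm_nonneg _
    have hstep : Real.sqrt k * l2norm (fun j => pad k v j - pad k v' j) ≤ 1 := by
      have h := mul_le_mul_of_nonneg_left hvv' (Real.sqrt_nonneg (k:ℝ))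
      have heq : Real.sqrt k * (1 / Real.sqrt k) = 1 := by
        field_simp
      linarith
    have hr : B * l1norm (fun j => pad k v j - pad k v' j) ≤ B := by
      have h1 : l1norm (fun j => pad k v j - pad k v' j) ≤ 1 := le_trans hl1 hstep
      nlinarith [HellAux.l1norm_nonneg (fun j => pad k v j - pad k v' j)]
    have hcrude := HellAux.crude hB hφmeas hbd (pad k v) (pad k v') hmem1 hmem2 hr
    have h2 : B * l1norm (fun j => pad k v j - pad k v' j)
        ≤ B * (Real.sqrt k * l2norm (fun j => pad k v j - pad k v' j)) :=
      mul_le_mul_of_nonneg_left hl1 hB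
    have h3 : 0 ≤ B * l1norm (fun j => pad k v j - pad k v' j) :=
      mul_nonneg hB (HellAux.l1norm_nonneg _)
    have h4 := pow_le_pow_left₀ h3 h2 2
    have eB : Real.exp B * Real.exp B = Real.exp (2*B) := by
      rw [HellAux.exp_mul_exp]; ring_nf
    have h5 : Real.exp (2*B)
          * (B * (Real.sqrt k * l2norm (fun j => pad k v j - pad k v' j)))^2
        = (B * Real.exp B * Real.sqrt k
            * l2norm (fun j => pad k v j - pad k v' j))^2 := by
      rw [← eB]; ring
    have hsqU : hellSq (expDens φ (pad k v)) (expDens φ (pad k v'))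
        ≤ (B * Real.exp B * Real.sqrt k
            * l2norm (fun j => pad k v j - pad k v' j))^2 := by
      calc hellSq (expDens φ (pad k v)) (expDens φ (pad k v'))
          ≤ Real.exp (2*B) * (B * l1norm (fun j => pad k v j - pad k v' j))^2 := hcrude
        _ ≤ Real.exp (2*B)
              * (B * (Real.sqrt k * l2norm (fun j => pad k v j - pad k v' j)))^2 :=
            mul_le_mul_of_nonneg_left h4 (Real.exp_pos _).le
        _ = _ := h5
    calc hell (expDens φ (pad k v)) (expDens φ (pad k v'))
        = Real.sqrt (hellSq (expDens φ (pad k v)) (expDens φ (pad k v'))) := rfl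
      _ ≤ Real.sqrt ((B * Real.exp B * Real.sqrt k
            * l2norm (fun j => pad k v j - pad k v' j))^2) := Real.sqrt_le_sqrt hsqU
      _ = B * Real.exp B * Real.sqrt k
            * l2norm (fun j => pad k v j - pad k v' j) :=
          Real.sqrt_sq (mul_nonneg (mul_nonneg (mul_nonneg hB (Real.exp_pos B).le)
            (Real.sqrt_nonneg _)) hD0)
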